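/- Let 1 ≤ m ≤ n < N/2, s ≥ 2, w ≥ 1, and 1 ≤ t ≤ s. If the set disjointness problem with parameters m, n, N has (s,w,t)-certificates, then for every real δ with 0 < δ < 1, either t·(w + log₂ s) ≥ n^{1−δ} or t·log₂ s ≥ m·(δ·log₂ n − 1). -/

import Mathlib

/-- `f` has `(s,w,t)`-certificates: there is a code `T : Y → Σ^s` with alphabet
`Σ = {0,1}^w` such that for every query `x` and database `y` some set `P` of at
most `t` cells determines the answer `f (x, y)`. -/
def HasCertificates {X Y Z : Type*} (f : X × Y → Z) (s w t : ℕ) : Prop :=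
  ∃ T : Y → Fin s → (Fin w → Bool),
    ∀ x : X, ∀ y : Y, ∃ P : Finset (Fin s), P.card ≤ t ∧
      ∀ y' : Y, (∀ i ∈ P, T y' i = T y i) → f (x, y') = f (x, y)

/-- The set disjointness problem on universe `{1,…,N}` with parameters `m, n`: queries are
`m`-element subsets, databases are `n`-element subsets, and the answer is `1` iff the two
sets are disjoint. -/
def setDisj (N m n : ℕ) :
    {x : Finset (Fin N) // x.card = m} × {y : Finset (Fin N) // y.card = n} → Fin 2 :=
  fun p => if Disjoint p.1.val p.2.val then 1 else 0


/-- descending factorial ratio bound: for `u ≤ a`, `u⁽ʲ⁾ aʲ ≤ a⁽ʲ⁾ uʲ`. -/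
lemma aux_descFac_mul_pow_le {u a : ℕ} (h : u ≤ a) (j : ℕ) :
    Nat.descFactorial u j * a ^ j ≤ Nat.descFactorial a j * u ^ j := by
  induction j with
  | zero => simp
  | succ j ih =>
      rw [Nat.descFactorial_succ, Nat.descFactorial_succ, pow_succ, pow_succ]
      have h1 : (u - j) * a ≤ (a - j) * u := by
        rcases le_or_gt j u with hju | hju
        · rw [Nat.sub_mul, Nat.sub_mul]
          have : j * u ≤ j * a := Nat.mul_le_mul_left _ h
          have h2 : u * a = a * u := Nat.mul_comm u a
          omega
        · have : u - j = 0 := by omega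
          simp [this]
      calc (u - j) * Nat.descFactorial u j * (a ^ j * a)
          = ((u - j) * a) * (Nat.descFactorial u j * a ^ j) := by ring
        _ ≤ ((a - j) * u) * (Nat.descFactorial a j * u ^ j) := Nat.mul_le_mul h1 ih
        _ = (a - j) * Nat.descFactorial a j * (u ^ j * u) := by ring

/-- binomial ratio bound: for `u ≤ a`, `C(u,j) aʲ ≤ C(a,j) uʲ`. -/
lemma aux_choose_mul_pow_le {u a : ℕ} (h : u ≤ a) (j : ℕ) :
    Nat.choose u j * a ^ j ≤ Nat.choose a j * u ^ j := by
  have := aux_descFac_mul_pow_le h j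
  rw [Nat.descFactorial_eq_factorial_mul_choose, Nat.descFactorial_eq_factorial_mul_choose] at this
  have hf : 0 < Nat.factorial j := Nat.factorial_pos j
  calc Nat.choose u j * a ^ j = (Nat.factorial j * (Nat.choose u j * a ^ j)) / Nat.factorial j := by
        rw [Nat.mul_div_cancel_left _ hf]
    _ ≤ (Nat.factorial j * (Nat.choose a j * u ^ j)) / Nat.factorial j := by
        apply Nat.div_le_div_right
        calc Nat.factorial j * (Nat.choose u j * a ^ j)
            = Nat.factorial j * Nat.choose u j * a ^ j := by ring
          _ ≤ Nat.factorial j * Nat.choose a j * u ^ j := this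
          _ = Nat.factorial j * (Nat.choose a j * u ^ j) := by ring
    _ = Nat.choose a j * u ^ j := by rw [Nat.mul_div_cancel_left _ hf]

/-- `2^c b^b ≤ (b+c)^b` for `c ≤ b`. -/
lemma aux_two_pow_mul_le {b c : ℕ} (h : c ≤ b) : 2 ^ c * b ^ b ≤ (b + c) ^ b := by
  have hexp : (c + b) ^ b = ∑ k ∈ Finset.range (b + 1), c ^ k * b ^ (b - k) * Nat.choose b k :=
    add_pow c b b
  have hsub : ∑ k ∈ Finset.range (c + 1), c ^ k * b ^ (b - k) * Nat.choose b k
      ≤ ∑ k ∈ Finset.range (b + 1), c ^ k * b ^ (b - k) * Nat.choose b k := by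
    apply Finset.sum_le_sum_of_subset
    exact Finset.range_subset_range.mpr (by omega)
  have hterm : ∀ k ∈ Finset.range (c + 1),
      Nat.choose c k * b ^ b ≤ c ^ k * b ^ (b - k) * Nat.choose b k := by
    intro k hk
    have hkc : k ≤ c := by simpa [Nat.lt_succ_iff] using hk
    have hkb : k ≤ b := hkc.trans h
    have := aux_choose_mul_pow_le h k  -- C(c,k) b^k ≤ C(b,k) c^k
    calc Nat.choose c k * b ^ b = (Nat.choose c k * b ^ k) * b ^ (b - k) := by
          rw [mul_assoc, ← pow_add]; congr 2; omega
      _ ≤ (Nat.choose b k * c ^ k) * b ^ (b - k) := Nat.mul_le_mul_right _ this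
      _ = c ^ k * b ^ (b - k) * Nat.choose b k := by ring
  calc 2 ^ c * b ^ b = ∑ k ∈ Finset.range (c + 1), Nat.choose c k * b ^ b := by
        rw [← Finset.sum_mul, Nat.sum_range_choose]
    _ ≤ ∑ k ∈ Finset.range (c + 1), c ^ k * b ^ (b - k) * Nat.choose b k :=
        Finset.sum_le_sum hterm
    _ ≤ (c + b) ^ b := by rw [hexp]; exact hsub
    _ = (b + c) ^ b := by rw [add_comm]

/-- choose column-ratio bound: `C(N-u, n) N^u ≤ C(N,n) (N-n)^u` for `n + u ≤ N`, `1 ≤ n`. -/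
lemma aux_choose_shift {N n : ℕ} (hn : 1 ≤ n) :
    ∀ u, n + u ≤ N → Nat.choose (N - u) n * N ^ u ≤ Nat.choose N n * (N - n) ^ u := by
  intro u
  induction u with
  | zero => simp
  | succ u ih =>
      intro hu
      have ih' := ih (by omega)
      set a := N - (u + 1) with ha
      have ha1 : a + 1 = N - u := by omega
      have hna : n ≤ a := by omega
      -- key: C(a,n) * N ≤ C(a+1,n) * (N-n)
      have hkey : Nat.choose a n * N ≤ Nat.choose (a + 1) n * (N - n) := by
        have hid : Nat.choose a n * (a + 1) = Nat.choose (a + 1) n * (a + 1 - n) :=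
          Nat.choose_mul_succ_eq a n
        have hpos : 0 < a + 1 - n := by omega
        apply Nat.le_of_mul_le_mul_right _ hpos
        calc Nat.choose a n * N * (a + 1 - n)
            = Nat.choose a n * (N * (a + 1 - n)) := by ring
          _ ≤ Nat.choose a n * ((a + 1) * (N - n)) := by
              apply Nat.mul_le_mul_left
              rw [Nat.mul_sub, Nat.mul_sub]
              have h1 : (a+1) * n ≤ N * n := Nat.mul_le_mul_right _ (by omega)
              have h2 : N * (a+1) = (a+1) * N := by ring
              omega
          _ = (Nat.choose a n * (a + 1)) * (N - n) := by ring
          _ = Nat.choose (a + 1) n * (a + 1 - n) * (N - n) := by rw [hid]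
          _ = Nat.choose (a + 1) n * (N - n) * (a + 1 - n) := by ring
      calc Nat.choose a n * N ^ (u + 1) = (Nat.choose a n * N) * N ^ u := by ring
        _ ≤ (Nat.choose (a + 1) n * (N - n)) * N ^ u := Nat.mul_le_mul_right _ hkey
        _ = (Nat.choose (a+1) n * N ^ u) * (N - n) := by ring
        _ ≤ (Nat.choose N n * (N - n) ^ u) * (N - n) := by
            rw [ha1]; exact Nat.mul_le_mul_right _ ih'
        _ = Nat.choose N n * (N - n) ^ (u + 1) := by ring


lemma aux_endgame (m n s w t u d κ : ℕ)
    (hm : 1 ≤ m) (hmn : m ≤ n)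
    (hs : 2 ≤ s) (hw : 1 ≤ w) (ht : 1 ≤ t)
    (hmu : m ≤ u) (hdn : n < d)
    (hκ1 : 1 ≤ κ) (hκle : κ ≤ s ^ t)
    (H1 : 2 ^ (n * u) ≤ (κ * 2 ^ (w * t)) ^ d)
    (H2 : d ^ m ≤ κ * u ^ m)
    (δ : ℝ) (hδ0 : 0 < δ) (hδ1 : δ < 1)
    (hbr : (t : ℝ) * ((w : ℝ) + Real.logb 2 s) < (n : ℝ) ^ ((1 : ℝ) - δ)) :
    (m : ℝ) * (δ * Real.logb 2 n - 1) ≤ (t : ℝ) * Real.logb 2 s := by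
  have hb : (1 : ℝ) < 2 := by norm_num
  have hn1 : 1 ≤ n := le_trans hm hmn
  have hnR : (0:ℝ) < n := by exact_mod_cast hn1
  have hd0 : 0 < d := by omega
  have hdR : (0:ℝ) < d := by exact_mod_cast hd0
  have huR : (0:ℝ) < u := by exact_mod_cast lt_of_lt_of_le hm hmu
  have hκR : (1:ℝ) ≤ κ := by exact_mod_cast hκ1
  have hκR0 : (0:ℝ) < κ := lt_of_lt_of_le one_pos hκR
  have hsR : (0:ℝ) < s := by positivity
  -- log of κ
  have hlogκ0 : 0 ≤ Real.logb 2 κ := Real.logb_nonneg hb hκR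
  have hlogκ : Real.logb 2 κ ≤ t * Real.logb 2 s := by
    have h1 : (κ:ℝ) ≤ (s:ℝ) ^ t := by exact_mod_cast hκle
    calc Real.logb 2 κ ≤ Real.logb 2 ((s:ℝ) ^ t) := Real.logb_le_logb_of_le hb hκR0 h1
      _ = t * Real.logb 2 s := Real.logb_pow 2 _ t
  -- r1 from H1
  have r1 : (n:ℝ) * u ≤ d * (Real.logb 2 κ + w * t) := by
    have hcast : ((2:ℝ)) ^ (n * u) ≤ ((κ:ℝ) * 2 ^ (w * t)) ^ d := by exact_mod_cast H1
    have hpos : (0:ℝ) < (2:ℝ) ^ (n * u) := by positivity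
    have hlog := Real.logb_le_logb_of_le hb hpos hcast
    rw [Real.logb_pow, Real.logb_pow, Real.logb_mul (ne_of_gt hκR0) (by positivity),
      Real.logb_pow, Real.logb_self_eq_one hb] at hlog
    push_cast at hlog
    linarith [hlog]
  -- r2 from H2
  have r2 : (m:ℝ) * Real.logb 2 d ≤ Real.logb 2 κ + m * Real.logb 2 u := by
    have hcast : ((d:ℝ)) ^ m ≤ (κ:ℝ) * (u:ℝ) ^ m := by exact_mod_cast H2
    have hpos : (0:ℝ) < (d:ℝ) ^ m := by positivity
    have hlog := Real.logb_le_logb_of_le hb hpos hcast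
    rw [Real.logb_pow, Real.logb_mul (ne_of_gt hκR0) (by positivity), Real.logb_pow] at hlog
    linarith
  set B : ℝ := Real.logb 2 κ + w * t with hB
  have hB1 : (1:ℝ) ≤ B := by
    have : (1:ℝ) ≤ (w:ℝ) * t := by
      have : (1:ℕ) ≤ w * t := Nat.one_le_iff_ne_zero.mpr (by positivity)
      exact_mod_cast this
    linarith
  have hBpos : (0:ℝ) < B := lt_of_lt_of_le one_pos hB1
  have hBE : B < (n:ℝ) ^ ((1:ℝ) - δ) := by
    have : B ≤ (t:ℝ) * ((w:ℝ) + Real.logb 2 s) := by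
      have expand : (t:ℝ) * ((w:ℝ) + Real.logb 2 s) = (w:ℝ) * t + t * Real.logb 2 s := by ring
      rw [expand, hB]; linarith
    linarith
  -- key comparison
  have key1 : (n:ℝ) / B ≤ (d:ℝ) / u := by
    rw [div_le_div_iff₀ hBpos huR]
    linarith [r1]

  have key2 : Real.logb 2 ((n:ℝ) / B) ≤ Real.logb 2 ((d:ℝ) / u) :=
    Real.logb_le_logb_of_le hb (by positivity) key1
  have r2' : (m:ℝ) * Real.logb 2 ((d:ℝ) / u) ≤ Real.logb 2 κ := by
    rw [Real.logb_div (ne_of_gt hdR) (ne_of_gt huR)]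
    nlinarith [r2]
  have chain : (m:ℝ) * Real.logb 2 ((n:ℝ) / B) ≤ (t:ℝ) * Real.logb 2 s := by
    calc (m:ℝ) * Real.logb 2 ((n:ℝ) / B) ≤ (m:ℝ) * Real.logb 2 ((d:ℝ) / u) :=
          mul_le_mul_of_nonneg_left key2 (by positivity)
      _ ≤ Real.logb 2 κ := r2'
      _ ≤ t * Real.logb 2 s := hlogκ
  -- final comparison
  have hlogB : Real.logb 2 B ≤ (1 - δ) * Real.logb 2 n := by
    calc Real.logb 2 B ≤ Real.logb 2 ((n:ℝ) ^ ((1:ℝ) - δ)) :=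
          Real.logb_le_logb_of_le hb hBpos (le_of_lt hBE)
      _ = (1 - δ) * Real.logb 2 n := Real.logb_rpow_eq_mul_logb_of_pos hnR
  have final : δ * Real.logb 2 n - 1 ≤ Real.logb 2 ((n:ℝ) / B) := by
    rw [Real.logb_div (ne_of_gt hnR) (ne_of_gt hBpos)]
    linarith
  calc (m:ℝ) * (δ * Real.logb 2 n - 1) ≤ (m:ℝ) * Real.logb 2 ((n:ℝ) / B) :=
        mul_le_mul_of_nonneg_left final (by positivity)
    _ ≤ (t:ℝ) * Real.logb 2 s := chain

lemma aux_core (N m n s w t : ℕ) (hm : 1 ≤ m) (hmn : m ≤ n) (hnN : 2 * n < N)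
    (ht : 1 ≤ t) (hts : t ≤ s)
    (T : {y : Finset (Fin N) // y.card = n} → Fin s → Fin w → Bool)
    (Pf : {x : Finset (Fin N) // x.card = m} → {y : Finset (Fin N) // y.card = n} → Finset (Fin s))
    (hPcard : ∀ x y, (Pf x y).card = t)
    (hPprop : ∀ x y y', (∀ i ∈ Pf x y, T y' i = T y i) →
      setDisj N m n (x, y') = setDisj N m n (x, y)) :
    ∃ u : ℕ, m ≤ u ∧ u ≤ N - n ∧
      2 ^ (n * u) ≤ (Nat.choose s t * 2 ^ (w * t)) ^ (N - n) ∧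
      (N - n) ^ m ≤ Nat.choose s t * u ^ m := by
  classical
  set κ := Nat.choose s t with hκ
  have hκpos : 0 < κ := Nat.choose_pos hts
  have cardY : Fintype.card ({y : Finset (Fin N) // y.card = n}) = N.choose n := by
    rw [Fintype.card_subtype]
    have : Finset.filter (fun y : Finset (Fin N) => y.card = n) Finset.univ
        = Finset.powersetCard n Finset.univ := by
      rw [Finset.powersetCard_eq_filter, Finset.powerset_univ]
    rw [this, Finset.card_powersetCard, Finset.card_univ, Fintype.card_fin]
  have hNnpos : 0 < N.choose n := Nat.choose_pos (by omega)
  set PP := Finset.powersetCard t (Finset.univ : Finset (Fin s)) with hPP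
  have hcardPP : PP.card = κ := by
    rw [hPP, Finset.card_powersetCard, Finset.card_univ, Fintype.card_fin]
  set fib : Finset (Fin s) → ({y : Finset (Fin N) // y.card = n}) → Finset ({y : Finset (Fin N) // y.card = n}) :=
    fun P y₀ => Finset.univ.filter (fun y : ({y : Finset (Fin N) // y.card = n}) => ∀ i ∈ P, T y i = T y₀ i) with hfib
  -- Step 1: a good database ystar
  have step1 : ∃ ystar : ({y : Finset (Fin N) // y.card = n}), ∀ P : Finset (Fin s), P.card = t →
      N.choose n ≤ κ * 2 ^ (w * t) * (fib P ystar).card := by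
    by_contra hcon
    push_neg at hcon
    set bad : Finset (Fin s) → Finset ({y : Finset (Fin N) // y.card = n}) :=
      fun P => Finset.univ.filter (fun y : ({y : Finset (Fin N) // y.card = n}) => κ * 2 ^ (w * t) * (fib P y).card < N.choose n)
      with hbad
    have claim2 : ∀ P : Finset (Fin s), P.card = t → κ * (bad P).card ≤ N.choose n - 1 := by
      intro P hPt
      set resP : ({y : Finset (Fin N) // y.card = n}) → (↥P → Fin w → Bool) := fun y i => T y i.1 with hres
      have hVcard : Fintype.card (↥P → Fin w → Bool) = 2 ^ (w * t) := by
        rw [Fintype.card_fun, Fintype.card_fun, Fintype.card_coe, hPt,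
          Fintype.card_fin, Fintype.card_bool, ← pow_mul]
      have hsplit : (bad P).card
          = ∑ v : (↥P → Fin w → Bool), ((bad P).filter (fun y => resP y = v)).card :=
        Finset.card_eq_sum_card_fiberwise (fun y _ => Finset.mem_univ (resP y))
      have hv : ∀ v : (↥P → Fin w → Bool),
          κ * 2 ^ (w * t) * ((bad P).filter (fun y => resP y = v)).card ≤ N.choose n - 1 := by
        intro v
        rcases Finset.eq_empty_or_nonempty ((bad P).filter (fun y => resP y = v)) with he | hne
        · rw [he]; simp
        · obtain ⟨y₀, hy₀⟩ := hne
          rw [Finset.mem_filter] at hy₀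
          have hy₀bad := hy₀.1
          rw [hbad, Finset.mem_filter] at hy₀bad
          have hsub : (bad P).filter (fun y => resP y = v) ⊆ fib P y₀ := by
            intro y hy
            rw [Finset.mem_filter] at hy
            rw [hfib, Finset.mem_filter]
            refine ⟨Finset.mem_univ _, fun i hi => ?_⟩
            have := congrFun (hy.2.trans hy₀.2.symm) ⟨i, hi⟩
            exact this
          have h1 : κ * 2 ^ (w * t) * ((bad P).filter (fun y => resP y = v)).card
              ≤ κ * 2 ^ (w * t) * (fib P y₀).card :=
            Nat.mul_le_mul_left _ (Finset.card_le_card hsub)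
          omega
      have htot : 2 ^ (w * t) * (κ * (bad P).card) ≤ 2 ^ (w * t) * (N.choose n - 1) := by
        calc 2 ^ (w * t) * (κ * (bad P).card)
            = κ * 2 ^ (w * t) * (bad P).card := by ring
          _ = ∑ v : (↥P → Fin w → Bool),
              κ * 2 ^ (w * t) * ((bad P).filter (fun y => resP y = v)).card := by
              rw [hsplit, Finset.mul_sum]
          _ ≤ ∑ _v : (↥P → Fin w → Bool), (N.choose n - 1) :=
              Finset.sum_le_sum (fun v _ => hv v)
          _ = Fintype.card (↥P → Fin w → Bool) * (N.choose n - 1) := by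
              rw [Finset.sum_const, Finset.card_univ, smul_eq_mul]
          _ = 2 ^ (w * t) * (N.choose n - 1) := by rw [hVcard]
      exact Nat.le_of_mul_le_mul_left htot (Nat.pow_pos (by norm_num))
    have hcover : (Finset.univ : Finset ({y : Finset (Fin N) // y.card = n})) ⊆ PP.biUnion bad := by
      intro y _
      obtain ⟨P, hPt, hlt⟩ := hcon y
      exact Finset.mem_biUnion.mpr ⟨P, Finset.mem_powersetCard_univ.mpr hPt,
        Finset.mem_filter.mpr ⟨Finset.mem_univ _, hlt⟩⟩
    have hcount : N.choose n ≤ ∑ P ∈ PP, (bad P).card := by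
      calc N.choose n = (Finset.univ : Finset ({y : Finset (Fin N) // y.card = n})).card := by rw [Finset.card_univ, cardY]
        _ ≤ (PP.biUnion bad).card := Finset.card_le_card hcover
        _ ≤ ∑ P ∈ PP, (bad P).card := Finset.card_biUnion_le
    have hfin : κ * N.choose n ≤ κ * (N.choose n - 1) := by
      calc κ * N.choose n ≤ κ * ∑ P ∈ PP, (bad P).card := Nat.mul_le_mul_left _ hcount
        _ = ∑ P ∈ PP, κ * (bad P).card := by rw [Finset.mul_sum]
        _ ≤ ∑ P ∈ PP, (N.choose n - 1) := Finset.sum_le_sum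
            (fun P hP => claim2 P (Finset.mem_powersetCard_univ.mp hP))
        _ = PP.card * (N.choose n - 1) := by rw [Finset.sum_const, smul_eq_mul]
        _ = κ * (N.choose n - 1) := by rw [hcardPP]
    have := Nat.le_of_mul_le_mul_left hfin hκpos
    omega
  obtain ⟨ystar, hstar⟩ := step1
  -- the union sets
  set U : Finset (Fin s) → Finset (Fin N) :=
    fun P => (Finset.univ.filter
      (fun x : ({x : Finset (Fin N) // x.card = m}) => Disjoint x.1 ystar.1 ∧ Pf x ystar = P)).biUnion (fun x => x.1) with hU
  have hcompl : (Finset.univ \ ystar.1).card = N - n := by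
    rw [Finset.card_sdiff_of_subset (Finset.subset_univ _), Finset.card_univ, Fintype.card_fin, ystar.2]
  -- Step 2
  have step2 : ∀ P : Finset (Fin s),
      (fib P ystar).card ≤ (N - (U P).card).choose n ∧ (U P).card ≤ N - n := by
    intro P
    have hUsub : U P ⊆ Finset.univ \ ystar.1 := by
      intro a ha
      rw [hU] at ha
      obtain ⟨x, hx, hax⟩ := Finset.mem_biUnion.mp ha
      rw [Finset.mem_filter] at hx
      exact Finset.mem_sdiff.mpr ⟨Finset.mem_univ _, Finset.disjoint_left.mp hx.2.1 hax⟩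
    have hUcard : (U P).card ≤ N - n := hcompl ▸ Finset.card_le_card hUsub
    refine ⟨?_, hUcard⟩
    have hdisj : ∀ y ∈ fib P ystar, Disjoint y.1 (U P) := by
      intro y hy
      rw [hfib, Finset.mem_filter] at hy
      rw [hU, Finset.disjoint_biUnion_right]
      intro x hx
      rw [Finset.mem_filter] at hx
      have hagree : ∀ i ∈ Pf x ystar, T y i = T ystar i := by
        intro i hi
        exact hy.2 i (hx.2.2 ▸ hi)
      have := hPprop x ystar y hagree
      rw [setDisj, setDisj] at this
      simp only at this
      rw [if_pos hx.2.1] at this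
      by_contra hnd
      have hnd' : ¬ Disjoint x.1 y.1 := fun hc => hnd hc.symm
      rw [if_neg hnd'] at this
      exact absurd this (by decide)
    have hmap : ∀ y ∈ fib P ystar, y.1 ∈ Finset.powersetCard n (Finset.univ \ U P) := by
      intro y hy
      rw [Finset.mem_powersetCard]
      refine ⟨?_, y.2⟩
      intro a ha
      exact Finset.mem_sdiff.mpr ⟨Finset.mem_univ _,
        Finset.disjoint_left.mp (hdisj y hy) ha⟩
    calc (fib P ystar).card ≤ (Finset.powersetCard n (Finset.univ \ U P)).card :=
          Finset.card_le_card_of_injOn (fun y => y.1) hmap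
            (fun y _ y' _ h => Subtype.ext h)
      _ = (N - (U P).card).choose n := by
          rw [Finset.card_powersetCard, Finset.card_sdiff_of_subset (Finset.subset_univ _),
            Finset.card_univ, Fintype.card_fin]
  -- Step 3
  have step3 : (N - n).choose m ≤ ∑ P ∈ PP, ((U P).card).choose m := by
    have hsub : Finset.powersetCard m (Finset.univ \ ystar.1)
        ⊆ PP.biUnion (fun P => Finset.powersetCard m (U P)) := by
      intro xh hxh
      rw [Finset.mem_powersetCard] at hxh
      set x : ({x : Finset (Fin N) // x.card = m}) := ⟨xh, hxh.2⟩ with hx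
      have hdis : Disjoint xh ystar.1 := by
        rw [Finset.disjoint_left]
        intro a ha
        exact (Finset.mem_sdiff.mp (hxh.1 ha)).2
      apply Finset.mem_biUnion.mpr
      refine ⟨Pf x ystar, Finset.mem_powersetCard_univ.mpr (hPcard x ystar), ?_⟩
      rw [Finset.mem_powersetCard]
      refine ⟨?_, hxh.2⟩
      have hxmem : x ∈ Finset.univ.filter
          (fun x' : ({x : Finset (Fin N) // x.card = m}) => Disjoint x'.1 ystar.1 ∧ Pf x' ystar = Pf x ystar) :=
        Finset.mem_filter.mpr ⟨Finset.mem_univ _, hdis, rfl⟩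
      calc xh = x.1 := rfl
        _ ⊆ _ := Finset.subset_biUnion_of_mem (fun x' => x'.1) hxmem
    calc (N - n).choose m = (Finset.powersetCard m (Finset.univ \ ystar.1)).card := by
          rw [Finset.card_powersetCard, hcompl]
      _ ≤ (PP.biUnion (fun P => Finset.powersetCard m (U P))).card :=
          Finset.card_le_card hsub
      _ ≤ ∑ P ∈ PP, (Finset.powersetCard m (U P)).card := Finset.card_biUnion_le
      _ = ∑ P ∈ PP, ((U P).card).choose m := by
          apply Finset.sum_congr rfl
          intro P _
          rw [Finset.card_powersetCard]
  -- pick the maximizer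
  have hPPne : PP.Nonempty := Finset.powersetCard_nonempty.mpr
    (by rw [Finset.card_univ, Fintype.card_fin]; exact hts)
  obtain ⟨Pstar, hPstarPP, hmax⟩ := Finset.exists_max_image PP (fun P => (U P).card) hPPne
  set u := (U Pstar).card with hu
  have hcardt : Pstar.card = t := Finset.mem_powersetCard_univ.mp hPstarPP
  have hule : u ≤ N - n := (step2 Pstar).2
  have A3 : (N - n).choose m ≤ κ * u.choose m := by
    calc (N - n).choose m ≤ ∑ P ∈ PP, ((U P).card).choose m := step3
      _ ≤ ∑ _P ∈ PP, u.choose m := Finset.sum_le_sum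
          (fun P hP => Nat.choose_le_choose m (hmax P hP))
      _ = κ * u.choose m := by rw [Finset.sum_const, smul_eq_mul, hcardPP]
  have hmu : m ≤ u := by
    by_contra hcon
    push_neg at hcon
    rw [Nat.choose_eq_zero_of_lt hcon, Nat.mul_zero] at A3
    have : 0 < (N - n).choose m := Nat.choose_pos (by omega)
    omega
  refine ⟨u, hmu, hule, ?_, ?_⟩
  · -- H1
    have A1 := hstar Pstar hcardt
    have A2 := (step2 Pstar).1
    have hnu : n + u ≤ N := by omega
    have hposC : 0 < (N - u).choose n := Nat.choose_pos (by omega)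
    have B : N.choose n ≤ κ * 2 ^ (w * t) * ((N - u).choose n) :=
      le_trans A1 (Nat.mul_le_mul_left _ A2)
    have shift := aux_choose_shift (by omega : 1 ≤ n) u hnu
    have E1 : N ^ u ≤ κ * 2 ^ (w * t) * (N - n) ^ u := by
      have h1 : (N - u).choose n * N ^ u ≤ (N - u).choose n * (κ * 2 ^ (w*t) * (N - n) ^ u) := by
        calc (N - u).choose n * N ^ u ≤ N.choose n * (N - n) ^ u := shift
          _ ≤ (κ * 2 ^ (w*t) * ((N-u).choose n)) * (N - n) ^ u := Nat.mul_le_mul_right _ B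
          _ = (N - u).choose n * (κ * 2 ^ (w*t) * (N - n) ^ u) := by ring
      exact Nat.le_of_mul_le_mul_left h1 hposC
    have E2 : 2 ^ n * (N - n) ^ (N - n) ≤ N ^ (N - n) := by
      have h := aux_two_pow_mul_le (show n ≤ N - n by omega)
      have heq : N - n + n = N := by omega
      rwa [heq] at h
    have hdpos : 0 < (N - n) ^ ((N - n) * u) := Nat.pow_pos (by omega)
    have final : 2 ^ (n * u) * (N - n) ^ ((N-n) * u)
        ≤ (κ * 2 ^ (w * t)) ^ (N - n) * (N - n) ^ ((N-n) * u) := by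
      calc 2 ^ (n * u) * (N - n) ^ ((N-n) * u)
          = (2 ^ n * (N - n) ^ (N - n)) ^ u := by
            rw [mul_pow, ← pow_mul, ← pow_mul]
        _ ≤ (N ^ (N - n)) ^ u := Nat.pow_le_pow_left E2 u
        _ = (N ^ u) ^ (N - n) := by rw [← pow_mul, ← pow_mul, mul_comm]
        _ ≤ (κ * 2 ^ (w * t) * (N - n) ^ u) ^ (N - n) := Nat.pow_le_pow_left E1 _
        _ = (κ * 2 ^ (w * t)) ^ (N - n) * (N - n) ^ ((N-n) * u) := by
            rw [mul_pow, ← pow_mul, mul_comm u (N-n)]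
    exact Nat.le_of_mul_le_mul_right final hdpos
  · -- H2
    have hchoosepos : 0 < u.choose m := Nat.choose_pos hmu
    have hineq := aux_choose_mul_pow_le hule m  -- C(u,m)(N-n)^m ≤ C(N-n,m) u^m
    have : u.choose m * ((N - n) ^ m) ≤ u.choose m * (κ * u ^ m) := by
      calc u.choose m * (N - n) ^ m ≤ (N - n).choose m * u ^ m := hineq
        _ ≤ (κ * u.choose m) * u ^ m := Nat.mul_le_mul_right _ A3
        _ = u.choose m * (κ * u ^ m) := by ring
    exact Nat.le_of_mul_le_mul_left this hchoosepos

/-- Certificate lower bound for set disjointness: if it has `(s,w,t)`-certificates, then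
for every `0 < δ < 1`, either `t·(w + log₂ s) ≥ n^{1−δ}` or `t·log₂ s ≥ m·(δ·log₂ n − 1)`. -/
theorem setDisj_certificate_lower_bound (N m n s w t : ℕ)
    (hm : 1 ≤ m) (hmn : m ≤ n) (hnN : 2 * n < N)
    (hs : 2 ≤ s) (hw : 1 ≤ w) (ht : 1 ≤ t) (hts : t ≤ s)
    (hcert : HasCertificates (setDisj N m n) s w t) :
    ∀ δ : ℝ, 0 < δ → δ < 1 →
      (n : ℝ) ^ ((1 : ℝ) - δ) ≤ (t : ℝ) * ((w : ℝ) + Real.logb 2 s) ∨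
      (m : ℝ) * (δ * Real.logb 2 n - 1) ≤ (t : ℝ) * Real.logb 2 s := by
  classical
  intro δ hδ0 hδ1
  by_cases hbr : (n : ℝ) ^ ((1 : ℝ) - δ) ≤ (t : ℝ) * ((w : ℝ) + Real.logb 2 s)
  · exact Or.inl hbr
  right
  push_neg at hbr
  obtain ⟨T, hT⟩ := hcert
  have hpad : ∀ (x : {x : Finset (Fin N) // x.card = m}) (y : {y : Finset (Fin N) // y.card = n}),
      ∃ P : Finset (Fin s), P.card = t ∧
        ∀ y', (∀ i ∈ P, T y' i = T y i) → setDisj N m n (x, y') = setDisj N m n (x, y) := by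
    intro x y
    obtain ⟨P₀, hc, hp⟩ := hT x y
    obtain ⟨P, hsub, hcard⟩ := Finset.exists_superset_card_eq hc
      (by rw [Fintype.card_fin]; exact hts)
    exact ⟨P, hcard, fun y' h => hp y' (fun i hi => h i (hsub hi))⟩
  choose Pf hPcard hPprop using hpad
  obtain ⟨u, hmu, hule, H1, H2⟩ := aux_core N m n s w t hm hmn hnN ht hts T Pf hPcard hPprop
  have hκ1 : 1 ≤ Nat.choose s t := Nat.choose_pos hts
  have hκle : Nat.choose s t ≤ s ^ t := by
    calc Nat.choose s t ≤ Nat.descFactorial s t := by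
          rw [Nat.descFactorial_eq_factorial_mul_choose]
          exact Nat.le_mul_of_pos_left _ (Nat.factorial_pos t)
      _ ≤ s ^ t := Nat.descFactorial_le_pow s t
  exact aux_endgame m n s w t u (N - n) (Nat.choose s t) hm hmn hs hw ht hmu (by omega)
    hκ1 hκle H1 H2 δ hδ0 hδ1 hbr
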